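/- For a tiled matrix of size p × q where p = 2^a and q = 2^b are both powers of two with q < p, the critical path length of the tiled BinaryTree algorithm (with TT kernels) equals (10 + 6 log₂ p) q − 4 log₂ p − 6. -/

import Mathlib

namespace TiledQR

/-- An elimination `elim(i, piv, k)`: tile `(i, k)` is zeroed out by an orthogonal
transformation combining row `i` with pivot row `piv`. -/
structure Elim where
  i : ℕ
  piv : ℕ
  k : ℕ
deriving DecidableEq

/-- `Before L e f` : the elimination `e` occurs strictly before `f` in the list `L`. -/
def Before (L : List Elim) (e f : Elim) : Prop :=
  ∃ a b : Fin L.length, (a : ℕ) < b ∧ L.get a = e ∧ L.get b = f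

/-- `L` is a valid elimination list for a `p × q` tiled matrix: it contains exactly one
elimination for every sub-diagonal tile `(i, k)` (`1 ≤ k ≤ min p q`, `k < i ≤ p`);
every elimination `elim(i, piv, k)` comes after all eliminations `elim(i, *, k')` and
`elim(piv, *, k')` with `k' < k`, and before the elimination `elim(piv, *, k)` of its
pivot row. -/
def ValidElimList (p q : ℕ) (L : List Elim) : Prop :=
  L.Nodup ∧
  (∀ e ∈ L, 1 ≤ e.k ∧ e.k ≤ min p q ∧ e.k < e.i ∧ e.i ≤ p ∧
      1 ≤ e.piv ∧ e.piv ≤ p ∧ e.piv ≠ e.i) ∧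
  (∀ i k, 1 ≤ k → k ≤ min p q → k < i → i ≤ p → ∃! piv, Elim.mk i piv k ∈ L) ∧
  (∀ a b : Fin L.length, (L.get b).k < (L.get a).k →
      ((L.get b).i = (L.get a).i ∨ (L.get b).i = (L.get a).piv) → (b : ℕ) < a) ∧
  (∀ a b : Fin L.length, (L.get b).k = (L.get a).k →
      (L.get b).i = (L.get a).piv → (a : ℕ) < b)

/-- The tasks of the tiled QR factorization with TT (triangle-on-top-of-triangle)
kernels. -/
inductive Task where
  | GEQRT (r k : ℕ)
  | UNMQR (r k j : ℕ)
  | TTQRT (i piv k : ℕ)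
  | TTMQR (i piv k j : ℕ)
deriving DecidableEq

/-- Weights of the TT kernels, the unit being `n_b ^ 3 / 3` flops. -/
def weight : Task → ℕ
  | .GEQRT _ _ => 4
  | .UNMQR _ _ _ => 6
  | .TTQRT _ _ _ => 2
  | .TTMQR _ _ _ _ => 6

/-- The tasks associated with a `p × q` tiled matrix and an elimination list `L`:
a factorization `GEQRT(r, k)` and updates `UNMQR(r, k, j)` (`k < j ≤ q`) for every tile
`(r, k)` with `k ≤ r ≤ p`, and, for every elimination `elim(i, piv, k)` of `L`, a task
`TTQRT(i, piv, k)` and updates `TTMQR(i, piv, k, j)` for `k < j ≤ q`. -/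
def InTasks (p q : ℕ) (L : List Elim) : Task → Prop
  | .GEQRT r k => 1 ≤ k ∧ k ≤ min p q ∧ k ≤ r ∧ r ≤ p
  | .UNMQR r k j => 1 ≤ k ∧ k ≤ min p q ∧ k ≤ r ∧ r ≤ p ∧ k < j ∧ j ≤ q
  | .TTQRT i piv k => Elim.mk i piv k ∈ L
  | .TTMQR i piv k j => Elim.mk i piv k ∈ L ∧ k < j ∧ j ≤ q

/-- The precedence (dependence) relation between the TT tasks.  Besides the flow
dependencies of the kernels, two tasks reading and writing a common tile
(a pivot tile reused by several eliminations of a column, or a pivot tile that is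
subsequently zeroed out) are serialized in the order of the elimination list. -/
inductive Prec (L : List Elim) : Task → Task → Prop
  | geqrt_unmqr (r k j : ℕ) :
      Prec L (.GEQRT r k) (.UNMQR r k j)
  | geqrt_ttqrt_row (i piv k : ℕ) :
      Prec L (.GEQRT i k) (.TTQRT i piv k)
  | geqrt_ttqrt_piv (i piv k : ℕ) :
      Prec L (.GEQRT piv k) (.TTQRT i piv k)
  | ttqrt_ttmqr (i piv k j : ℕ) :
      Prec L (.TTQRT i piv k) (.TTMQR i piv k j)
  | unmqr_ttmqr_row (i piv k j : ℕ) :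
      Prec L (.UNMQR i k j) (.TTMQR i piv k j)
  | unmqr_ttmqr_piv (i piv k j : ℕ) :
      Prec L (.UNMQR piv k j) (.TTMQR i piv k j)
  | ttmqr_geqrt (a b i k : ℕ) : 2 ≤ k → (a = i ∨ b = i) →
      Prec L (.TTMQR a b (k - 1) k) (.GEQRT i k)
  | ttqrt_serial (i i' piv k : ℕ) :
      Before L (Elim.mk i piv k) (Elim.mk i' piv k) →
      Prec L (.TTQRT i piv k) (.TTQRT i' piv k)
  | ttmqr_serial (i i' piv k j : ℕ) :
      Before L (Elim.mk i piv k) (Elim.mk i' piv k) →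
      Prec L (.TTMQR i piv k j) (.TTMQR i' piv k j)
  | ttqrt_pivot_use (a i piv k : ℕ) :
      Prec L (.TTQRT a i k) (.TTQRT i piv k)
  | ttmqr_pivot_use (a i piv k j : ℕ) :
      Prec L (.TTMQR a i k j) (.TTMQR i piv k j)

/-- A path in the weighted task DAG. -/
def IsPath (p q : ℕ) (L : List Elim) (path : List Task) : Prop :=
  (∀ t ∈ path, InTasks p q L t) ∧ path.Chain' (Prec L)

/-- The critical path length of the tiled algorithm given by the elimination list `L`:
the maximum total weight of a path in the weighted task DAG (equivalently, the makespan
of the earliest-start schedule with unboundedly many processors). -/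
noncomputable def cpLength (p q : ℕ) (L : List Elim) : ℕ :=
  sSup { w : ℕ | ∃ path : List Task, IsPath p q L path ∧ w = (path.map weight).sum }
/-- The elimination list of the tiled BinaryTree algorithm: in each column `k`, at
stage `s = 1, 2, …`, every row `i` such that `i - k` is an odd multiple of `2 ^ (s - 1)`
is zeroed out using pivot row `i - 2 ^ (s - 1)`; eliminations are listed column by
column and, within a column, by increasing stage. -/
def btList (p q : ℕ) : List Elim :=
  (List.range' 1 (min p q)).flatMap fun k =>
    (List.range' 1 p).flatMap fun s =>
      (List.range' (k + 1) (p - k)).filterMap fun i =>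
        if (i - k) % 2 ^ s = 2 ^ (s - 1) then some (Elim.mk i (i - 2 ^ (s - 1)) k)
        else none

/-! ### Auxiliary arithmetic lemmas -/

lemma mem_range1 {s n m : ℕ} : m ∈ List.range' s n ↔ s ≤ m ∧ m < s + n := by
  rw [List.mem_range']
  constructor
  · rintro ⟨i, hi, rfl⟩; omega
  · rintro ⟨h1, h2⟩; exact ⟨m - s, by omega, by omega⟩

lemma fact2_of_mod {n s : ℕ} (h : n % 2 ^ s = 2 ^ (s - 1)) :
    1 ≤ s ∧ n.factorization 2 = s - 1 := by
  rcases Nat.eq_zero_or_pos s with rfl | hs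
  · rw [pow_zero, Nat.mod_one] at h
    simp at h
  obtain ⟨s', rfl⟩ : ∃ s', s = s' + 1 := ⟨s - 1, by omega⟩
  refine ⟨by omega, ?_⟩
  simp only [Nat.add_sub_cancel] at h ⊢
  have hpos : (0:ℕ) < 2 ^ s' := Nat.two_pow_pos s'
  have hn : n ≠ 0 := by
    rintro rfl; simp at h; omega
  have hdvd : 2 ^ s' ∣ n := by
    have h1 : n % 2 ^ s' = n % 2 ^ (s' + 1) % 2 ^ s' :=
      (Nat.mod_mod_of_dvd n (pow_dvd_pow 2 (Nat.le_succ s'))).symm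
    rw [h, Nat.mod_self] at h1
    exact Nat.dvd_of_mod_eq_zero h1
  have hndvd : ¬ 2 ^ (s' + 1) ∣ n := by
    intro hd
    rw [Nat.mod_eq_zero_of_dvd hd] at h
    omega
  have hle : s' ≤ n.factorization 2 :=
    (Nat.Prime.pow_dvd_iff_le_factorization Nat.prime_two hn).mp hdvd
  have hlt : ¬ (s' + 1 ≤ n.factorization 2) := fun hc =>
    hndvd ((Nat.Prime.pow_dvd_iff_le_factorization Nat.prime_two hn).mpr hc)
  omega

lemma fact2_lt_of_lt {n a : ℕ} (h0 : n ≠ 0) (h : n < 2 ^ a) : n.factorization 2 < a := by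
  have hd : 2 ^ (n.factorization 2) ∣ n := Nat.ordProj_dvd n 2
  have h1 := Nat.le_of_dvd (Nat.pos_of_ne_zero h0) hd
  exact (Nat.pow_lt_pow_iff_right (by norm_num)).mp (lt_of_le_of_lt h1 h)

lemma fact2_two_pow (n : ℕ) : (2 ^ n : ℕ).factorization 2 = n := by
  rw [Nat.Prime.factorization_pow Nat.prime_two]
  simp

lemma mod_two_pow_sub {t m : ℕ} (hm : 1 ≤ m) :
    (2 ^ (t + 1) * m - 2 ^ t) % 2 ^ (t + 1) = 2 ^ t := by
  obtain ⟨m', rfl⟩ : ∃ m', m = m' + 1 := ⟨m - 1, by omega⟩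
  have hpos : (0:ℕ) < 2 ^ t := Nat.two_pow_pos t
  have h1 : (2:ℕ) ^ (t + 1) = 2 * 2 ^ t := by rw [pow_succ]; ring
  have e : (2:ℕ) ^ (t + 1) * (m' + 1) = 2 ^ (t + 1) * m' + 2 ^ (t + 1) := by ring
  have h2 : 2 ^ (t + 1) * (m' + 1) - 2 ^ t = 2 ^ t + 2 ^ (t + 1) * m' := by omega
  rw [h2, Nat.add_mul_mod_self_left]
  exact Nat.mod_eq_of_lt (by omega)

/-! ### Structure of `btList` -/

/-- The (0-based) stage index of an elimination. -/
def stg (e : Elim) : ℕ := (e.i - e.k).factorization 2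

/-- Strict lexicographic order on `(column, stage, row)`. -/
def Rlex (e f : Elim) : Prop :=
  e.k < f.k ∨ (e.k = f.k ∧ (stg e < stg f ∨ (stg e = stg f ∧ e.i < f.i)))

lemma mem_btList_iff {p q : ℕ} {e : Elim} :
    e ∈ btList p q ↔ ∃ k s i, e = Elim.mk i (i - 2 ^ (s - 1)) k ∧
      1 ≤ k ∧ k ≤ min p q ∧ 1 ≤ s ∧ s ≤ p ∧ k < i ∧ i ≤ p ∧
      (i - k) % 2 ^ s = 2 ^ (s - 1) := by
  simp only [btList, List.mem_flatMap, List.mem_filterMap, mem_range1]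
  constructor
  · rintro ⟨k, hk, s, hs, i, hi, hif⟩
    have hkp : min p q ≤ p := min_le_left _ _
    split at hif
    · refine ⟨k, s, i, (Option.some_inj.mp hif).symm, by omega, by omega, by omega,
        by omega, by omega, by omega, by assumption⟩
    · simp at hif
  · rintro ⟨k, s, i, rfl, h1, h2, h3, h4, h5, h6, h7⟩
    have hkp : min p q ≤ p := min_le_left _ _
    exact ⟨k, ⟨by omega, by omega⟩, s, ⟨by omega, by omega⟩, i, ⟨by omega, by omega⟩,
      by rw [if_pos h7]⟩

lemma of_mem_btList {p q : ℕ} {e : Elim} (he : e ∈ btList p q) :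
    ∃ s, 1 ≤ s ∧ 1 ≤ e.k ∧ e.k ≤ min p q ∧ e.k < e.i ∧ e.i ≤ p ∧
      (e.i - e.k) % 2 ^ s = 2 ^ (s - 1) ∧ e.piv = e.i - 2 ^ (s - 1) ∧
      stg e = s - 1 ∧ 2 ^ (s - 1) ≤ e.i - e.k := by
  rw [mem_btList_iff] at he
  obtain ⟨k, s, i, rfl, h1, h2, h3, h4, h5, h6, h7⟩ := he
  have hst := (fact2_of_mod h7).2
  have hle : 2 ^ (s - 1) ≤ i - k := by
    have := Nat.mod_le (i - k) (2 ^ s); omega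
  exact ⟨s, h3, h1, h2, h5, h6, h7, rfl, hst, hle⟩

lemma mk_mem_btList {p q k s i : ℕ} (h3 : 1 ≤ s) (h4 : s ≤ p) (h1 : 1 ≤ k)
    (h2 : k ≤ min p q) (h5 : k < i) (h6 : i ≤ p)
    (h7 : (i - k) % 2 ^ s = 2 ^ (s - 1)) :
    Elim.mk i (i - 2 ^ (s - 1)) k ∈ btList p q :=
  mem_btList_iff.mpr ⟨k, s, i, rfl, h1, h2, h3, h4, h5, h6, h7⟩

lemma pairwise_btList (p q : ℕ) : (btList p q).Pairwise Rlex := by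
  unfold btList
  rw [List.pairwise_flatMap]
  constructor
  · intro k _
    rw [List.pairwise_flatMap]
    constructor
    · intro s _
      rw [List.pairwise_filterMap]
      refine List.Pairwise.imp ?_ List.pairwise_lt_range'
      intro i i' hii b hb b' hb'
      split at hb
      case isFalse => simp at hb
      split at hb'
      case isFalse => simp at hb'
      rename_i hc hc'
      obtain rfl : b = Elim.mk i (i - 2 ^ (s - 1)) k := (Option.some_inj.mp hb).symm
      obtain rfl : b' = Elim.mk i' (i' - 2 ^ (s - 1)) k := (Option.some_inj.mp hb').symm
      right
      refine ⟨rfl, Or.inr ⟨?_, hii⟩⟩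
      simp only [stg]
      rw [(fact2_of_mod hc).2, (fact2_of_mod hc').2]
    · refine List.Pairwise.imp ?_ List.pairwise_lt_range'
      intro s s' hss b hb b' hb'
      simp only [List.mem_filterMap] at hb hb'
      obtain ⟨i, -, hb⟩ := hb
      obtain ⟨i', -, hb'⟩ := hb'
      split at hb
      case isFalse => simp at hb
      split at hb'
      case isFalse => simp at hb'
      rename_i hc hc'
      obtain rfl : b = Elim.mk i (i - 2 ^ (s - 1)) k := (Option.some_inj.mp hb).symm
      obtain rfl : b' = Elim.mk i' (i' - 2 ^ (s' - 1)) k := (Option.some_inj.mp hb').symm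
      right
      refine ⟨rfl, Or.inl ?_⟩
      simp only [stg]
      have c1 := fact2_of_mod hc
      have c2 := fact2_of_mod hc'
      rw [c1.2, c2.2]
      have := c1.1; have := c2.1
      omega
  · refine List.Pairwise.imp ?_ List.pairwise_lt_range'
    intro k k' hkk b hb b' hb'
    simp only [List.mem_flatMap, List.mem_filterMap] at hb hb'
    obtain ⟨s, -, i, -, hb⟩ := hb
    obtain ⟨s', -, i', -, hb'⟩ := hb'
    split at hb
    case isFalse => simp at hb
    split at hb'
    case isFalse => simp at hb'
    obtain rfl : b = Elim.mk i (i - 2 ^ (s - 1)) k := (Option.some_inj.mp hb).symm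
    obtain rfl : b' = Elim.mk i' (i' - 2 ^ (s' - 1)) k' := (Option.some_inj.mp hb').symm
    exact Or.inl hkk

lemma rlex_of_before {p q : ℕ} {e f : Elim} (h : Before (btList p q) e f) :
    Rlex e f := by
  obtain ⟨ia, ib, hab, rfl, rfl⟩ := h
  exact List.pairwise_iff_get.mp (pairwise_btList p q) ia ib (by exact_mod_cast hab)

lemma rlex_irrefl (e : Elim) : ¬ Rlex e e := by
  simp only [Rlex]; omega

lemma before_of_rlex {p q : ℕ} {e f : Elim} (he : e ∈ btList p q)
    (hf : f ∈ btList p q) (h : Rlex e f) : Before (btList p q) e f := by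
  obtain ⟨ia, ha⟩ := List.get_of_mem he
  obtain ⟨ib, hb⟩ := List.get_of_mem hf
  rcases lt_trichotomy (ia : ℕ) (ib : ℕ) with hlt | heq | hgt
  · exact ⟨ia, ib, hlt, ha, hb⟩
  · exfalso
    have : ia = ib := Fin.ext heq
    subst this
    rw [ha] at hb; subst hb
    exact rlex_irrefl e h
  · exfalso
    have h2 : Rlex f e := by
      have := List.pairwise_iff_get.mp (pairwise_btList p q) ib ia (by exact_mod_cast hgt)
      rwa [ha, hb] at this
    rcases h with h | ⟨hk, h | ⟨hs, h⟩⟩ <;> rcases h2 with h2 | ⟨hk2, h2 | ⟨hs2, h2⟩⟩ <;> omega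

/-! ### The potential function (upper bound on earliest finish times) -/

/-- An upper bound on the earliest finish time of each task of the BinaryTree
algorithm on a `2 ^ a × 2 ^ b` tiled matrix. -/
def phi (a : ℕ) : Task → ℕ
  | .GEQRT _ k => (k - 1) * (10 + 6 * a) + 4
  | .UNMQR _ k _ => (k - 1) * (10 + 6 * a) + 10
  | .TTQRT i _ k => (k - 1) * (10 + 6 * a) + 4 + 2 * ((i - k).factorization 2 + 1)
  | .TTMQR i _ k _ => (k - 1) * (10 + 6 * a) + 10 + 6 * ((i - k).factorization 2 + 1)

lemma weight_le_phi (a : ℕ) (t : Task) : weight t ≤ phi a t := by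
  cases t <;> simp only [phi, weight] <;> omega

lemma Before.mem_left {L : List Elim} {e f : Elim} (h : Before L e f) : e ∈ L := by
  obtain ⟨ia, ib, _, rfl, _⟩ := h; exact List.mem_iff_get.mpr ⟨ia, rfl⟩

lemma Before.mem_right {L : List Elim} {e f : Elim} (h : Before L e f) : f ∈ L := by
  obtain ⟨ia, ib, _, _, rfl⟩ := h; exact List.mem_iff_get.mpr ⟨ib, rfl⟩

lemma of_mem_btList_mk {p q i piv k : ℕ} (he : Elim.mk i piv k ∈ btList p q) :
    ∃ s, 1 ≤ s ∧ 1 ≤ k ∧ k ≤ min p q ∧ k < i ∧ i ≤ p ∧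
      (i - k) % 2 ^ s = 2 ^ (s - 1) ∧ piv = i - 2 ^ (s - 1) ∧
      (i - k).factorization 2 = s - 1 ∧ 2 ^ (s - 1) ≤ i - k :=
  of_mem_btList he

lemma stg_lt_of_serial {p q : ℕ} {i i' piv k : ℕ}
    (h : Before (btList p q) (Elim.mk i piv k) (Elim.mk i' piv k)) :
    (i - k).factorization 2 < (i' - k).factorization 2 := by
  have hr := rlex_of_before h
  obtain ⟨s, hs1, hk1, hk2, hki, hip, hmod, hpiv, hstg, hle⟩ := of_mem_btList_mk h.mem_left
  obtain ⟨s', hs1', hk1', hk2', hki', hip', hmod', hpiv', hstg', hle'⟩ :=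
    of_mem_btList_mk h.mem_right
  simp only [Rlex, stg] at hr
  rcases hr with hr | ⟨-, hr | ⟨hr1, hr2⟩⟩
  · omega
  · exact hr
  · exfalso
    have hs : s = s' := by omega
    subst hs
    omega

lemma stg_lt_of_pivot_use {p q : ℕ} {a' i piv k : ℕ}
    (h1 : Elim.mk a' i k ∈ btList p q) (h2 : Elim.mk i piv k ∈ btList p q) :
    (a' - k).factorization 2 < (i - k).factorization 2 := by
  obtain ⟨s, hs1, hk1, hk2, hki, hip, hmod, hpiv, hstg, hle⟩ := of_mem_btList_mk h1
  obtain ⟨s', hs1', hk1', hk2', hki', hip', hmod', hpiv', hstg', hle'⟩ := of_mem_btList_mk h2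
  have hdm := Nat.div_add_mod (a' - k) (2 ^ s)
  have hdvd : 2 ^ s ∣ (i - k) := ⟨(a' - k) / 2 ^ s, by omega⟩
  have hne : i - k ≠ 0 := by omega
  have hs2 : s ≤ (i - k).factorization 2 :=
    (Nat.Prime.pow_dvd_iff_le_factorization Nat.prime_two hne).mp hdvd
  omega

lemma phi_edge {a b : ℕ} {t t' : Task}
    (ht : InTasks (2 ^ a) (2 ^ b) (btList (2 ^ a) (2 ^ b)) t)
    (ht' : InTasks (2 ^ a) (2 ^ b) (btList (2 ^ a) (2 ^ b)) t')
    (hp : Prec (btList (2 ^ a) (2 ^ b)) t t') :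
    phi a t + weight t' ≤ phi a t' := by
  cases hp with
  | geqrt_unmqr r k j => simp only [phi, weight]; omega
  | geqrt_ttqrt_row i piv k => simp only [phi, weight]; omega
  | geqrt_ttqrt_piv i piv k => simp only [phi, weight]; omega
  | ttqrt_ttmqr i piv k j => simp only [phi, weight]; omega
  | unmqr_ttmqr_row i piv k j => simp only [phi, weight]; omega
  | unmqr_ttmqr_piv i piv k j => simp only [phi, weight]; omega
  | ttmqr_geqrt a' b' i k h2 hor =>
      obtain ⟨hmem, hj1, hj2⟩ := ht
      obtain ⟨s, hs1, hk1, hk2, hki, hip, hmod, hpiv, hstg, hle⟩ := of_mem_btList_mk hmem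
      simp only [phi, weight]
      have hne : a' - (k - 1) ≠ 0 := by omega
      have hlt : a' - (k - 1) < 2 ^ a := by
        have := Nat.one_le_two_pow (n := a); omega
      have hf : (a' - (k - 1)).factorization 2 < a := fact2_lt_of_lt hne hlt
      have e1 : (k - 1 - 1) * (10 + 6 * a) = (k - 2) * (10 + 6 * a) := by
        rw [Nat.sub_sub]
      have e2 : (k - 1) * (10 + 6 * a) = (k - 2) * (10 + 6 * a) + (10 + 6 * a) := by
        have hk : k - 1 = (k - 2) + 1 := by omega
        rw [hk, add_mul, one_mul]
      omega
  | ttqrt_serial i i' piv k hb =>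
      have := stg_lt_of_serial hb
      simp only [phi, weight]; omega
  | ttmqr_serial i i' piv k j hb =>
      have := stg_lt_of_serial hb
      simp only [phi, weight]; omega
  | ttqrt_pivot_use a' i piv k =>
      have := stg_lt_of_pivot_use ht ht'
      simp only [phi, weight]; omega
  | ttmqr_pivot_use a' i piv k j =>
      have := stg_lt_of_pivot_use ht.1 ht'.1
      simp only [phi, weight]; omega

lemma phi_le {a b : ℕ} (hab : b < a) {t : Task}
    (ht : InTasks (2 ^ a) (2 ^ b) (btList (2 ^ a) (2 ^ b)) t) :
    phi a t ≤ (2 ^ b - 1) * (10 + 6 * a) + 4 + 2 * a := by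
  have hq1 : (1:ℕ) ≤ 2 ^ b := Nat.one_le_two_pow
  have hmin : min (2 ^ a) (2 ^ b) = 2 ^ b :=
    min_eq_right (le_of_lt (Nat.pow_lt_pow_right (by norm_num) hab))
  have hmono : ∀ k k' : ℕ, k ≤ k' → k * (10 + 6 * a) ≤ k' * (10 + 6 * a) :=
    fun k k' h => Nat.mul_le_mul_right _ h
  have e2 : (2 ^ b - 1) * (10 + 6 * a) = (2 ^ b - 2) * (10 + 6 * a) + (10 + 6 * a) ∨
      2 ^ b = 1 := by
    rcases Nat.lt_or_ge (2 ^ b) 2 with h | h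
    · right; omega
    · left
      have hk : 2 ^ b - 1 = (2 ^ b - 2) + 1 := by omega
      rw [hk, add_mul, one_mul]
  cases t with
  | GEQRT r k =>
      obtain ⟨h1, h2, h3, h4⟩ := ht
      rw [hmin] at h2
      have := hmono (k - 1) (2 ^ b - 1) (by omega)
      simp only [phi]; omega
  | UNMQR r k j =>
      obtain ⟨h1, h2, h3, h4, h5, h6⟩ := ht
      have := hmono (k - 1) (2 ^ b - 2) (by omega)
      rcases e2 with e2 | e2
      · simp only [phi]; omega
      · simp only [phi]; omega
  | TTQRT i piv k =>
      obtain ⟨s, hs1, hk1, hk2, hki, hip, hmod, hpiv, hstg, hle⟩ := of_mem_btList_mk ht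
      rw [hmin] at hk2
      have hne : i - k ≠ 0 := by omega
      have hlt : i - k < 2 ^ a := by
        have := Nat.one_le_two_pow (n := a); omega
      have hf : (i - k).factorization 2 < a := fact2_lt_of_lt hne hlt
      have := hmono (k - 1) (2 ^ b - 1) (by omega)
      simp only [phi]; omega
  | TTMQR i piv k j =>
      obtain ⟨hmem, hj1, hj2⟩ := ht
      obtain ⟨s, hs1, hk1, hk2, hki, hip, hmod, hpiv, hstg, hle⟩ := of_mem_btList_mk hmem
      have hne : i - k ≠ 0 := by omega
      have hlt : i - k < 2 ^ a := by
        have := Nat.one_le_two_pow (n := a); omega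
      have hf : (i - k).factorization 2 < a := fact2_lt_of_lt hne hlt
      have := hmono (k - 1) (2 ^ b - 2) (by omega)
      rcases e2 with e2 | e2
      · simp only [phi]; omega
      · simp only [phi]; omega

lemma sum_le_phi {a b : ℕ} (l : List Task) :
    ∀ t : Task, (∀ x ∈ l ++ [t], InTasks (2 ^ a) (2 ^ b) (btList (2 ^ a) (2 ^ b)) x) →
    List.Chain' (Prec (btList (2 ^ a) (2 ^ b))) (l ++ [t]) →
    ((l ++ [t]).map weight).sum ≤ phi a t := by
  induction l using List.reverseRecOn with
  | nil => intro t _ _; simpa using weight_le_phi a t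
  | append_singleton l s ih =>
      intro t hmem hchain
      obtain ⟨c1, c2, hx⟩ := List.isChain_append.mp hchain
      have hst : Prec (btList (2 ^ a) (2 ^ b)) s t := by
        apply hx
        · rw [List.getLast?_concat]; rfl
        · rfl
      have hsum : (((l ++ [s]) ++ [t]).map weight).sum
          = ((l ++ [s]).map weight).sum + weight t := by
        simp
        try omega
      rw [hsum]
      have hs_mem : InTasks (2 ^ a) (2 ^ b) (btList (2 ^ a) (2 ^ b)) s :=
        hmem s (by simp)
      have ht_mem : InTasks (2 ^ a) (2 ^ b) (btList (2 ^ a) (2 ^ b)) t :=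
        hmem t (by simp)
      calc ((l ++ [s]).map weight).sum + weight t
          ≤ phi a s + weight t := by
            have := ih s (fun x hx' => hmem x (by simp at hx' ⊢; tauto)) c1
            omega
        _ ≤ phi a t := phi_edge hs_mem ht_mem hst

lemma sum_le_CP {a b : ℕ} (hab : b < a) {path : List Task}
    (hp : IsPath (2 ^ a) (2 ^ b) (btList (2 ^ a) (2 ^ b)) path) :
    (path.map weight).sum ≤ (2 ^ b - 1) * (10 + 6 * a) + 4 + 2 * a := by
  rcases List.eq_nil_or_concat path with rfl | ⟨l, t, rfl⟩
  · simp
  · rw [List.concat_eq_append] at hp ⊢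
    exact le_trans (sum_le_phi l t hp.1 hp.2) (phi_le hab (hp.1 t (by simp)))

/-! ### The witness critical path -/

/-- Segment of the critical path inside column `k < q`: a factorization, an update,
and a longest chain of `TTMQR` updates through all `a` stages of the reduction tree. -/
def colSeg (a k : ℕ) : List Task :=
  Task.GEQRT (k + 2 ^ (a - 1) - 1) k :: Task.UNMQR (k + 2 ^ (a - 1) - 1) k (k + 1) ::
  (((List.range (a - 1)).map fun t =>
      Task.TTMQR (k + 2 ^ (a - 1) - 2 ^ t) (k + 2 ^ (a - 1) - 2 ^ (t + 1)) k (k + 1))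
  ++ [Task.TTMQR (k + 2 ^ (a - 1)) k k (k + 1)])

/-- Segment of the critical path inside the last column `q`: a factorization and a
longest chain of `TTQRT` eliminations through all `a` stages of the reduction tree. -/
def lastSeg (a q : ℕ) : List Task :=
  Task.GEQRT (q + 2 ^ (a - 1) - 1) q ::
  (((List.range (a - 1)).map fun t =>
      Task.TTQRT (q + 2 ^ (a - 1) - 2 ^ t) (q + 2 ^ (a - 1) - 2 ^ (t + 1)) q)
  ++ [Task.TTQRT (q + 2 ^ (a - 1)) q q])

/-- The witness critical path. -/
def witness (a q : ℕ) : List Task :=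
  ((List.range' 1 (q - 1)).flatMap (colSeg a)) ++ lastSeg a q

lemma two_pow_split {a : ℕ} (ha : 1 ≤ a) : (2:ℕ) ^ a = 2 ^ (a - 1) + 2 ^ (a - 1) := by
  obtain ⟨a', rfl⟩ : ∃ a', a = a' + 1 := ⟨a - 1, by omega⟩
  simp only [Nat.add_sub_cancel, pow_succ]
  omega

lemma pow_le_pow2 {t u : ℕ} (h : t ≤ u) : (2:ℕ) ^ t ≤ 2 ^ u :=
  Nat.pow_le_pow_right (by norm_num) h

lemma min_two_pow {a b : ℕ} (hab : b < a) : min (2 ^ a) (2 ^ b) = 2 ^ b :=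
  min_eq_right (pow_le_pow2 (le_of_lt hab))

/-- Membership of the stage-`t+1` elimination of the witness chain in column `k`. -/
lemma colElim_mem {a b k t : ℕ} (hab : b < a) (hk : 1 ≤ k) (hkq : k ≤ 2 ^ b)
    (ht : t ≤ a - 2) (ha : 2 ≤ a) :
    Elim.mk (k + 2 ^ (a - 1) - 2 ^ t) (k + 2 ^ (a - 1) - 2 ^ (t + 1)) k
      ∈ btList (2 ^ a) (2 ^ b) := by
  have h1 : (2:ℕ) ^ (t + 1) = 2 ^ t + 2 ^ t := by rw [pow_succ]; omega
  have h2 : (2:ℕ) ^ t ≤ 2 ^ (a - 2) := pow_le_pow2 (by omega)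
  have h3 : (2:ℕ) ^ (a - 2) + 2 ^ (a - 2) = 2 ^ (a - 1) := by
    have := two_pow_split (a := a - 1) (by omega)
    have e : a - 1 - 1 = a - 2 := by omega
    rw [e] at this; omega
  have h4 : (2:ℕ) ^ b ≤ 2 ^ (a - 1) := pow_le_pow2 (by omega)
  have h5 : (2:ℕ) ^ a = 2 ^ (a - 1) + 2 ^ (a - 1) := two_pow_split (by omega)
  have hpos : (0:ℕ) < 2 ^ t := Nat.two_pow_pos t
  have halt : a < 2 ^ a := Nat.lt_two_pow_self (n := a)
  have hpiv : k + 2 ^ (a - 1) - 2 ^ (t + 1)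
      = (k + 2 ^ (a - 1) - 2 ^ t) - 2 ^ ((t + 1) - 1) := by
    simp only [Nat.add_sub_cancel]; omega
  rw [hpiv]
  apply mk_mem_btList (by omega) (by omega) hk (by rw [min_two_pow hab]; omega)
    (by omega) (by omega)
  have hik : k + 2 ^ (a - 1) - 2 ^ t - k = 2 ^ (t + 1) * 2 ^ (a - 2 - t) - 2 ^ t := by
    rw [← pow_add]
    have e : t + 1 + (a - 2 - t) = a - 1 := by omega
    rw [e]; omega
  rw [hik]
  simp only [Nat.add_sub_cancel]
  exact mod_two_pow_sub (Nat.one_le_two_pow)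

/-- Membership of the final (stage `a`) elimination of column `k`. -/
lemma finElim_mem {a b k : ℕ} (hab : b < a) (hk : 1 ≤ k) (hkq : k ≤ 2 ^ b) :
    Elim.mk (k + 2 ^ (a - 1)) k k ∈ btList (2 ^ a) (2 ^ b) := by
  have h4 : (2:ℕ) ^ b ≤ 2 ^ (a - 1) := pow_le_pow2 (by omega)
  have h5 : (2:ℕ) ^ a = 2 ^ (a - 1) + 2 ^ (a - 1) := two_pow_split (by omega)
  have hpos : (0:ℕ) < 2 ^ (a - 1) := Nat.two_pow_pos _
  have halt : a < 2 ^ a := Nat.lt_two_pow_self (n := a)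
  have hpiv : k = (k + 2 ^ (a - 1)) - 2 ^ (a - 1) := by omega
  rw [show Elim.mk (k + 2 ^ (a - 1)) k k
      = Elim.mk (k + 2 ^ (a - 1)) ((k + 2 ^ (a - 1)) - 2 ^ (a - 1)) k by rw [← hpiv]]
  apply mk_mem_btList (by omega) (by omega) hk (by rw [min_two_pow hab]; omega)
    (by omega) (by omega)
  have e : k + 2 ^ (a - 1) - k = 2 ^ (a - 1) := by omega
  rw [e]
  exact Nat.mod_eq_of_lt (by omega)

lemma head?_map_range {α : Type*} (f : ℕ → α) {m : ℕ} (hm : 0 < m) :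
    ((List.range m).map f).head? = some (f 0) := by
  obtain ⟨m', rfl⟩ : ∃ m', m = m' + 1 := ⟨m - 1, by omega⟩
  rw [List.range_succ_eq_map]
  rfl

lemma getLast?_map_range {α : Type*} (f : ℕ → α) {m : ℕ} (hm : 0 < m) :
    ((List.range m).map f).getLast? = some (f (m - 1)) := by
  obtain ⟨m', rfl⟩ : ∃ m', m = m' + 1 := ⟨m - 1, by omega⟩
  rw [List.range_succ]
  simp

lemma chain_map_range {α : Type*} {R : α → α → Prop} (f : ℕ → α) (m : ℕ)
    (hf : ∀ t, t + 1 < m → R (f t) (f (t + 1))) :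
    List.Chain' R ((List.range m).map f) := by
  induction m with
  | zero => exact List.isChain_nil
  | succ m ih =>
      rw [List.range_succ, List.map_append]
      apply List.IsChain.append (ih fun t ht => hf t (by omega)) (List.isChain_singleton _)
      intro x hx y hy
      rcases Nat.eq_zero_or_pos m with rfl | hm
      · simp at hx
      · rw [getLast?_map_range f hm] at hx
        simp only [Option.mem_def, Option.some_inj] at hx hy
        simp only [List.head?_cons, Option.some_inj] at hy
        subst hx; subst hy
        have := hf (m - 1) (by omega)
        have e : m - 1 + 1 = m := by omega
        rwa [e] at this

lemma sum_map_weight_const {m c : ℕ} {f : ℕ → Task} (hf : ∀ t, weight (f t) = c) :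
    (((List.range m).map f).map weight).sum = m * c := by
  induction m with
  | zero => simp
  | succ m ih =>
      rw [List.range_succ, List.map_append, List.map_append, List.sum_append, ih]
      simp [hf, Nat.succ_mul]

lemma colSeg_props {a b k : ℕ} (hab : b < a) (ha2 : 2 ≤ a) (hk : 1 ≤ k)
    (hkq : k ≤ 2 ^ b - 1) :
    (∀ x ∈ colSeg a k, InTasks (2 ^ a) (2 ^ b) (btList (2 ^ a) (2 ^ b)) x) ∧
    List.Chain' (Prec (btList (2 ^ a) (2 ^ b))) (colSeg a k) ∧
    ((colSeg a k).map weight).sum = 10 + 6 * a ∧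
    (colSeg a k).getLast? = some (Task.TTMQR (k + 2 ^ (a - 1)) k k (k + 1)) ∧
    (colSeg a k).head? = some (Task.GEQRT (k + 2 ^ (a - 1) - 1) k) := by
  have hq1 : (1:ℕ) ≤ 2 ^ b := Nat.one_le_two_pow
  have hq2 : (2:ℕ) ≤ 2 ^ b := by omega
  have h4 : (2:ℕ) ^ b ≤ 2 ^ (a - 1) := pow_le_pow2 (by omega)
  have h5 : (2:ℕ) ^ a = 2 ^ (a - 1) + 2 ^ (a - 1) := two_pow_split (by omega)
  have h3 : (2:ℕ) ^ (a - 2) + 2 ^ (a - 2) = 2 ^ (a - 1) := by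
    have := two_pow_split (a := a - 1) (by omega)
    have e : a - 1 - 1 = a - 2 := by omega
    rw [e] at this; omega
  have hpos : (0:ℕ) < 2 ^ (a - 1) := Nat.two_pow_pos _
  have hpos2 : (0:ℕ) < 2 ^ (a - 2) := Nat.two_pow_pos _
  refine ⟨?_, ?_, ?_, ?_, ?_⟩
  · intro x hx
    simp only [colSeg, List.mem_cons, List.mem_append, List.mem_map, List.mem_range,
      List.mem_singleton] at hx
    rcases hx with rfl | rfl | ⟨⟨t, ht, rfl⟩ | rfl | h⟩
    · exact ⟨hk, by rw [min_two_pow hab]; omega, by omega, by omega⟩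
    · exact ⟨hk, by rw [min_two_pow hab]; omega, by omega, by omega, by omega, by omega⟩
    · exact ⟨colElim_mem hab hk (by omega) (by omega) ha2, by omega, by omega⟩
    · exact ⟨finElim_mem hab hk (by omega), by omega, by omega⟩
    · exact absurd h List.not_mem_nil
  · have hmap : List.Chain' (Prec (btList (2 ^ a) (2 ^ b)))
        ((List.range (a - 1)).map fun t =>
          Task.TTMQR (k + 2 ^ (a - 1) - 2 ^ t) (k + 2 ^ (a - 1) - 2 ^ (t + 1)) k (k + 1)) :=
      chain_map_range _ _ fun t _ => Prec.ttmqr_pivot_use _ _ _ _ _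
    have hfin : List.Chain' (Prec (btList (2 ^ a) (2 ^ b)))
        (((List.range (a - 1)).map fun t =>
          Task.TTMQR (k + 2 ^ (a - 1) - 2 ^ t) (k + 2 ^ (a - 1) - 2 ^ (t + 1)) k (k + 1))
          ++ [Task.TTMQR (k + 2 ^ (a - 1)) k k (k + 1)]) := by
      apply List.IsChain.append hmap (List.isChain_singleton _)
      intro x hx y hy
      rw [getLast?_map_range _ (by omega : 0 < a - 1)] at hx
      simp only [Option.mem_def, Option.some_inj, List.head?_cons] at hx hy
      subst hx; subst hy
      have e1 : k + 2 ^ (a - 1) - 2 ^ (a - 1 - 1 + 1) = k := by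
        have e : a - 1 - 1 + 1 = a - 1 := by omega
        rw [e]; omega
      rw [e1]
      apply Prec.ttmqr_serial
      apply before_of_rlex
      · have := colElim_mem (t := a - 2) hab hk (by omega) (by omega) ha2
        have e2 : a - 1 - 1 = a - 2 := by omega
        rw [e2, e1] at *
        convert this using 3
        omega
      · exact finElim_mem hab hk (by omega)
      · right
        refine ⟨rfl, Or.inl ?_⟩
      
        simp only [stg]
        have e2 : k + 2 ^ (a - 1) - 2 ^ (a - 1 - 1) - k = 2 ^ (a - 2) := by
          have e : a - 1 - 1 = a - 2 := by omega
          rw [e]; omega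
        have e3 : k + 2 ^ (a - 1) - k = 2 ^ (a - 1) := by omega
        rw [e2, e3, fact2_two_pow, fact2_two_pow]
        omega
    simp only [colSeg]
    show List.IsChain _ _
    rw [List.isChain_cons, List.isChain_cons]
    refine ⟨?_, ?_, hfin⟩
    · intro y hy
      simp only [List.head?_cons, Option.mem_def, Option.some_inj] at hy
      subst hy
      exact Prec.geqrt_unmqr _ _ _
    · intro y hy
      rw [List.head?_append, head?_map_range _ (by omega : 0 < a - 1)] at hy
      simp only [Option.some_or, Option.mem_def, Option.some_inj] at hy
      subst hy
      have e0 : k + 2 ^ (a - 1) - 2 ^ 0 = k + 2 ^ (a - 1) - 1 := by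
        norm_num
      rw [e0]
      exact Prec.unmqr_ttmqr_row _ _ _ _
  · simp only [colSeg, List.map_cons, List.map_append, List.sum_cons, List.sum_append,
      weight]
    rw [sum_map_weight_const (c := 6) (f := fun t =>
      Task.TTMQR (k + 2 ^ (a - 1) - 2 ^ t) (k + 2 ^ (a - 1) - 2 ^ (t + 1)) k (k + 1))
      (fun t => rfl)]
    simp only [List.map_cons, List.map_nil, List.sum_cons, List.sum_nil, weight]
    omega
  · show (List.cons _ (List.cons _ _)).getLast? = _
    rw [show Task.GEQRT (k + 2 ^ (a - 1) - 1) k :: Task.UNMQR (k + 2 ^ (a-1) - 1) k (k+1) ::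
        (((List.range (a - 1)).map fun t =>
          Task.TTMQR (k + 2 ^ (a - 1) - 2 ^ t) (k + 2 ^ (a - 1) - 2 ^ (t + 1)) k (k + 1))
          ++ [Task.TTMQR (k + 2 ^ (a - 1)) k k (k + 1)])
        = (Task.GEQRT (k + 2 ^ (a - 1) - 1) k :: Task.UNMQR (k + 2 ^ (a-1) - 1) k (k+1) ::
          ((List.range (a - 1)).map fun t =>
          Task.TTMQR (k + 2 ^ (a - 1) - 2 ^ t) (k + 2 ^ (a - 1) - 2 ^ (t + 1)) k (k + 1)))
          ++ [Task.TTMQR (k + 2 ^ (a - 1)) k k (k + 1)] from by simp]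
    exact List.getLast?_concat
  · rfl

lemma lastSeg_props {a b : ℕ} (hab : b < a) :
    (∀ x ∈ lastSeg a (2 ^ b), InTasks (2 ^ a) (2 ^ b) (btList (2 ^ a) (2 ^ b)) x) ∧
    List.Chain' (Prec (btList (2 ^ a) (2 ^ b))) (lastSeg a (2 ^ b)) ∧
    ((lastSeg a (2 ^ b)).map weight).sum = 4 + 2 * a ∧
    (lastSeg a (2 ^ b)).head? = some (Task.GEQRT (2 ^ b + 2 ^ (a - 1) - 1) (2 ^ b)) := by
  have hq1 : (1:ℕ) ≤ 2 ^ b := Nat.one_le_two_pow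
  have h4 : (2:ℕ) ^ b ≤ 2 ^ (a - 1) := pow_le_pow2 (by omega)
  have h5 : (2:ℕ) ^ a = 2 ^ (a - 1) + 2 ^ (a - 1) := two_pow_split (by omega)
  have h3 : 2 ≤ a → (2:ℕ) ^ (a - 2) + 2 ^ (a - 2) = 2 ^ (a - 1) := by
    intro ha2
    have := two_pow_split (a := a - 1) (by omega)
    have e : a - 1 - 1 = a - 2 := by omega
    rw [e] at this; omega
  have hpos : (0:ℕ) < 2 ^ (a - 1) := Nat.two_pow_pos _
  refine ⟨?_, ?_, ?_, ?_⟩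
  · intro x hx
    simp only [lastSeg, List.mem_cons, List.mem_append, List.mem_map, List.mem_range,
      List.mem_singleton] at hx
    rcases hx with rfl | ⟨⟨t, ht, rfl⟩ | rfl | h⟩
    · exact ⟨hq1, by rw [min_two_pow hab], by omega, by omega⟩
    · exact colElim_mem hab hq1 le_rfl (by omega) (by omega)
    · exact finElim_mem hab hq1 le_rfl
    · exact absurd h List.not_mem_nil
  · rcases Nat.lt_or_ge a 2 with ha1 | ha2
    · have ha : a = 1 := by omega
      have hb : b = 0 := by omega
      subst ha; subst hb
      simp only [lastSeg]
      exact List.isChain_pair.mpr (Prec.geqrt_ttqrt_piv 2 1 1)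
    · have hmap : List.Chain' (Prec (btList (2 ^ a) (2 ^ b)))
          ((List.range (a - 1)).map fun t =>
            Task.TTQRT (2 ^ b + 2 ^ (a - 1) - 2 ^ t) (2 ^ b + 2 ^ (a - 1) - 2 ^ (t + 1))
              (2 ^ b)) :=
        chain_map_range _ _ fun t _ => Prec.ttqrt_pivot_use _ _ _ _
      have hfin : List.Chain' (Prec (btList (2 ^ a) (2 ^ b)))
          (((List.range (a - 1)).map fun t =>
            Task.TTQRT (2 ^ b + 2 ^ (a - 1) - 2 ^ t) (2 ^ b + 2 ^ (a - 1) - 2 ^ (t + 1))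
              (2 ^ b)) ++ [Task.TTQRT (2 ^ b + 2 ^ (a - 1)) (2 ^ b) (2 ^ b)]) := by
        apply List.IsChain.append hmap (List.isChain_singleton _)
        intro x hx y hy
        rw [getLast?_map_range _ (by omega : 0 < a - 1)] at hx
        simp only [Option.mem_def, Option.some_inj, List.head?_cons] at hx hy
        subst hx; subst hy
        have e1 : 2 ^ b + 2 ^ (a - 1) - 2 ^ (a - 1 - 1 + 1) = 2 ^ b := by
          have e : a - 1 - 1 + 1 = a - 1 := by omega
          rw [e]; omega
        rw [e1]
        apply Prec.ttqrt_serial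
        apply before_of_rlex
        · have h3' := h3 ha2
          have e2 : a - 1 - 1 = a - 2 := by omega
          rw [e2]
          have hmem := colElim_mem (t := a - 2) hab hq1 le_rfl (by omega) ha2
          rw [pow_succ] at hmem
          have epiv : 2 ^ b + 2 ^ (a - 1) - 2 ^ (a - 2) * 2 = 2 ^ b := by omega
          rw [epiv] at hmem
          exact hmem
        · exact finElim_mem hab hq1 le_rfl
        · right
          refine ⟨rfl, Or.inl ?_⟩
          simp only [stg]
          have e2 : 2 ^ b + 2 ^ (a - 1) - 2 ^ (a - 1 - 1) - 2 ^ b = 2 ^ (a - 2) := by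
            have e : a - 1 - 1 = a - 2 := by omega
            rw [e]
            have := h3 ha2
            omega
          have e3 : 2 ^ b + 2 ^ (a - 1) - 2 ^ b = 2 ^ (a - 1) := by omega
          rw [e2, e3, fact2_two_pow, fact2_two_pow]
          omega
      simp only [lastSeg]
      show List.IsChain _ _
      rw [List.isChain_cons]
      refine ⟨?_, hfin⟩
      intro y hy
      rw [List.head?_append, head?_map_range _ (by omega : 0 < a - 1)] at hy
      simp only [Option.some_or, Option.mem_def, Option.some_inj] at hy
      subst hy
      have e0 : 2 ^ b + 2 ^ (a - 1) - 2 ^ 0 = 2 ^ b + 2 ^ (a - 1) - 1 := by norm_num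
      rw [e0]
      exact Prec.geqrt_ttqrt_row _ _ _
  · simp only [lastSeg, List.map_cons, List.map_append, List.sum_cons, List.sum_append,
      weight]
    rw [sum_map_weight_const (c := 2) (f := fun t =>
      Task.TTQRT (2 ^ b + 2 ^ (a - 1) - 2 ^ t) (2 ^ b + 2 ^ (a - 1) - 2 ^ (t + 1)) (2 ^ b))
      (fun t => rfl)]
    simp only [List.map_cons, List.map_nil, List.sum_cons, List.sum_nil, weight]
    omega
  · rfl

lemma wprefix {a b : ℕ} (hab : b < a) (ha2 : 2 ≤ a) :
    ∀ n, 1 ≤ n → n ≤ 2 ^ b - 1 →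
      (∀ x ∈ (List.range' 1 n).flatMap (colSeg a),
          InTasks (2 ^ a) (2 ^ b) (btList (2 ^ a) (2 ^ b)) x) ∧
      List.Chain' (Prec (btList (2 ^ a) (2 ^ b))) ((List.range' 1 n).flatMap (colSeg a)) ∧
      (((List.range' 1 n).flatMap (colSeg a)).map weight).sum = n * (10 + 6 * a) ∧
      ((List.range' 1 n).flatMap (colSeg a)).getLast?
        = some (Task.TTMQR (n + 2 ^ (a - 1)) n n (n + 1)) := by
  intro n
  induction n with
  | zero => intro h1 _; omega
  | succ n ih =>
      intro h1 h2
      rcases Nat.eq_zero_or_pos n with rfl | hn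
      · obtain ⟨cmem, cchain, csum, clast, chead⟩ := colSeg_props hab ha2 le_rfl h2
        have e : List.range' 1 1 = [1] := rfl
        rw [e]
        simp only [List.flatMap_cons, List.flatMap_nil, List.append_nil]
        refine ⟨cmem, cchain, by rw [csum]; omega, by rw [clast]⟩
      · obtain ⟨pmem, pchain, psum, plast⟩ := ih (by omega) (by omega)
        obtain ⟨cmem, cchain, csum, clast, chead⟩ :=
          colSeg_props (k := n + 1) hab ha2 (by omega) h2
        have hr : List.range' 1 (n + 1) = List.range' 1 n ++ [n + 1] := by
          rw [List.range'_1_concat, Nat.add_comm 1 n]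
        rw [hr]
        simp only [List.flatMap_append, List.flatMap_cons, List.flatMap_nil,
          List.append_nil, List.map_append, List.sum_append, List.mem_append]
        refine ⟨?_, ?_, ?_, ?_⟩
        · intro x hx
          rcases hx with h | h
          exacts [pmem x h, cmem x h]
        · apply List.IsChain.append pchain cchain
          intro x hx y hy
          rw [plast] at hx
          rw [chead] at hy
          simp only [Option.mem_def, Option.some_inj] at hx hy
          subst hx; subst hy
          have e1 : n + 1 + 2 ^ (a - 1) - 1 = n + 2 ^ (a - 1) := by
            have := Nat.two_pow_pos (a - 1); omega
          rw [e1]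
          exact Prec.ttmqr_geqrt (n + 2 ^ (a - 1)) n (n + 2 ^ (a - 1)) (n + 1)
            (by omega) (Or.inl rfl)
        · rw [psum, csum]
          have e : (n + 1) * (10 + 6 * a) = n * (10 + 6 * a) + (10 + 6 * a) := by
            rw [Nat.add_mul, Nat.one_mul]
          omega
        · rw [List.getLast?_append, clast]
          rfl

lemma witness_good {a b : ℕ} (hab : b < a) :
    IsPath (2 ^ a) (2 ^ b) (btList (2 ^ a) (2 ^ b)) (witness a (2 ^ b)) ∧
    ((witness a (2 ^ b)).map weight).sum = (2 ^ b - 1) * (10 + 6 * a) + 4 + 2 * a := by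
  have hq1 : (1:ℕ) ≤ 2 ^ b := Nat.one_le_two_pow
  obtain ⟨lmem, lchain, lsum, lhead⟩ := lastSeg_props hab
  rcases Nat.eq_zero_or_pos b with rfl | hb
  · have e : witness a (2 ^ 0) = lastSeg a (2 ^ 0) := by
      simp [witness]
    rw [e]
    exact ⟨⟨lmem, lchain⟩, by rw [lsum]; norm_num⟩
  · have ha2 : 2 ≤ a := by omega
    have hq2 : (2:ℕ) ≤ 2 ^ b := by
      calc (2:ℕ) = 2 ^ 1 := rfl
        _ ≤ 2 ^ b := pow_le_pow2 (by omega)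
    obtain ⟨pmem, pchain, psum, plast⟩ := wprefix hab ha2 (2 ^ b - 1) (by omega) le_rfl
    unfold witness
    refine ⟨⟨?_, ?_⟩, ?_⟩
    · intro x hx
      rcases List.mem_append.mp hx with h | h
      exacts [pmem x h, lmem x h]
    · apply List.IsChain.append pchain lchain
      intro x hx y hy
      rw [plast] at hx
      rw [lhead] at hy
      simp only [Option.mem_def, Option.some_inj] at hx hy
      subst hx; subst hy
      have e1 : 2 ^ b - 1 + 1 = 2 ^ b := Nat.sub_add_cancel hq1
      have e2 : 2 ^ b - 1 + 2 ^ (a - 1) = 2 ^ b + 2 ^ (a - 1) - 1 :=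
        (Nat.sub_add_comm hq1).symm
      rw [e1, e2]
      exact Prec.ttmqr_geqrt (2 ^ b + 2 ^ (a - 1) - 1) (2 ^ b - 1)
        (2 ^ b + 2 ^ (a - 1) - 1) (2 ^ b) (by omega) (Or.inl rfl)
    · rw [List.map_append, List.sum_append, psum, lsum]
      omega

/-- For a `p × q` tiled matrix where `p = 2 ^ a` and `q = 2 ^ b` are both powers of two
with `q < p`, the critical path length of the tiled BinaryTree algorithm (with TT
kernels) equals `(10 + 6 log₂ p) q - 4 log₂ p - 6`. -/
theorem binaryTree_cpLength_pow_two (a b : ℕ) (h : 2 ^ b < 2 ^ a) :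
    cpLength (2 ^ a) (2 ^ b) (btList (2 ^ a) (2 ^ b)) =
      (10 + 6 * a) * 2 ^ b - 4 * a - 6 := by
  have hab : b < a := (Nat.pow_lt_pow_iff_right (by norm_num : 1 < 2)).mp h
  have hq1 : (1:ℕ) ≤ 2 ^ b := Nat.one_le_two_pow
  have hc : 10 + 6 * a ≤ 2 ^ b * (10 + 6 * a) :=
    Nat.le_mul_of_pos_left _ (by positivity)
  have hsub : (2 ^ b - 1) * (10 + 6 * a) = 2 ^ b * (10 + 6 * a) - 1 * (10 + 6 * a) :=
    Nat.sub_mul _ _ _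
  have hcomm : (10 + 6 * a) * 2 ^ b = 2 ^ b * (10 + 6 * a) := Nat.mul_comm _ _
  have hCP : (10 + 6 * a) * 2 ^ b - 4 * a - 6 = (2 ^ b - 1) * (10 + 6 * a) + 4 + 2 * a := by
    rw [hcomm, hsub]
    omega
  rw [hCP]
  obtain ⟨hpath, hsum⟩ := witness_good hab
  unfold cpLength
  apply le_antisymm
  · apply csSup_le
    · exact ⟨_, witness a (2 ^ b), hpath, rfl⟩
    · rintro w ⟨path, hp, rfl⟩
      exact sum_le_CP hab hp
  · apply le_csSup
    · refine ⟨(2 ^ b - 1) * (10 + 6 * a) + 4 + 2 * a, ?_⟩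
      rintro w ⟨path, hp, rfl⟩
      exact sum_le_CP hab hp
    · exact ⟨witness a (2 ^ b), hpath, hsum.symm⟩

end TiledQR
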